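/- Let A and B be positive definite n×n complex matrices. Then for every s ∈ [0,1], (1/2)(Tr A + Tr B − Tr |A−B|) ≤ Tr(A^{1−s} B^{s}). -/

import Mathlib

open scoped ComplexOrder

/-- Functional calculus for Hermitian matrices (junk value `0` off the Hermitian matrices). -/
noncomputable def cfcM {d : ℕ} (f : ℝ → ℝ) (A : Matrix (Fin d) (Fin d) ℂ) :
    Matrix (Fin d) (Fin d) ℂ :=
  if h : A.IsHermitian then
    (h.eigenvectorUnitary : Matrix (Fin d) (Fin d) ℂ) *
      Matrix.diagonal (fun i => (f (h.eigenvalues i) : ℂ)) *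
      (star (h.eigenvectorUnitary : Matrix (Fin d) (Fin d) ℂ))
  else 0

/-- Real power of a (positive) Hermitian matrix via functional calculus. -/
noncomputable def mpow {d : ℕ} (A : Matrix (Fin d) (Fin d) ℂ) (s : ℝ) :
    Matrix (Fin d) (Fin d) ℂ := cfcM (fun x => x ^ s) A

/-- Absolute value of a Hermitian matrix via functional calculus. -/
noncomputable def matAbs {d : ℕ} (A : Matrix (Fin d) (Fin d) ℂ) :
    Matrix (Fin d) (Fin d) ℂ := cfcM (fun x => |x|) A

open Matrix Filter

section Development

variable {d : ℕ} {A B C M N P Q R X W : Matrix (Fin d) (Fin d) ℂ}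

lemma cfcM_of_isHermitian (hA : A.IsHermitian) (f : ℝ → ℝ) :
    cfcM f A = (hA.eigenvectorUnitary : Matrix (Fin d) (Fin d) ℂ) *
      Matrix.diagonal (fun i => (f (hA.eigenvalues i) : ℂ)) *
      (star (hA.eigenvectorUnitary : Matrix (Fin d) (Fin d) ℂ)) := by
  rw [cfcM, dif_pos hA]

lemma cfcM_mul (hA : A.IsHermitian) (f g : ℝ → ℝ) :
    cfcM f A * cfcM g A = cfcM (fun x => f x * g x) A := by
  rw [cfcM_of_isHermitian hA f, cfcM_of_isHermitian hA g,
    cfcM_of_isHermitian hA (fun x => f x * g x)]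
  set U : Matrix (Fin d) (Fin d) ℂ := (hA.eigenvectorUnitary : Matrix (Fin d) (Fin d) ℂ)
  have h1 : star U * U = 1 := Unitary.star_mul_self_of_mem hA.eigenvectorUnitary.2
  simp only [mul_assoc]
  rw [show star U * (U * (Matrix.diagonal (fun i => (g (hA.eigenvalues i) : ℂ)) * star U))
      = Matrix.diagonal (fun i => (g (hA.eigenvalues i) : ℂ)) * star U from by
    rw [← mul_assoc, h1, one_mul], ← mul_assoc (Matrix.diagonal _), diagonal_mul_diagonal]
  simp only [mul_assoc, Complex.ofReal_mul]

lemma cfcM_isHermitian (hA : A.IsHermitian) (f : ℝ → ℝ) : (cfcM f A).IsHermitian := by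
  rw [cfcM_of_isHermitian hA f]
  have hD : (Matrix.diagonal (fun i => (f (hA.eigenvalues i) : ℂ)))ᴴ
      = Matrix.diagonal (fun i => (f (hA.eigenvalues i) : ℂ)) := by
    rw [diagonal_conjTranspose]
    congr 1
    funext i
    simp [Pi.star_def, Complex.conj_ofReal]
  unfold Matrix.IsHermitian
  rw [show (star (hA.eigenvectorUnitary : Matrix (Fin d) (Fin d) ℂ))
      = (hA.eigenvectorUnitary : Matrix (Fin d) (Fin d) ℂ)ᴴ from rfl]
  rw [conjTranspose_mul, conjTranspose_mul, conjTranspose_conjTranspose, hD, mul_assoc]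

lemma cfcM_add (hA : A.IsHermitian) (f g : ℝ → ℝ) :
    cfcM f A + cfcM g A = cfcM (fun x => f x + g x) A := by
  rw [cfcM_of_isHermitian hA f, cfcM_of_isHermitian hA g,
    cfcM_of_isHermitian hA (fun x => f x + g x)]
  rw [← add_mul, ← mul_add, diagonal_add]
  congr 3
  funext i
  push_cast
  ring

lemma cfcM_sub (hA : A.IsHermitian) (f g : ℝ → ℝ) :
    cfcM f A - cfcM g A = cfcM (fun x => f x - g x) A := by
  rw [cfcM_of_isHermitian hA f, cfcM_of_isHermitian hA g,
    cfcM_of_isHermitian hA (fun x => f x - g x)]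
  rw [← sub_mul, ← mul_sub, diagonal_sub]
  congr 3
  funext i
  push_cast
  ring

lemma cfcM_id (hA : A.IsHermitian) : cfcM (fun x => x) A = A := by
  rw [cfcM_of_isHermitian hA]
  exact hA.spectral_theorem.symm

lemma cfcM_one (hA : A.IsHermitian) : cfcM (fun _ => 1) A = 1 := by
  rw [cfcM_of_isHermitian hA]
  simp only [Complex.ofReal_one, diagonal_one, mul_one]
  exact Unitary.mul_star_self_of_mem hA.eigenvectorUnitary.2

lemma cfcM_congr (hA : A.IsHermitian) {f g : ℝ → ℝ}
    (h : ∀ i, f (hA.eigenvalues i) = g (hA.eigenvalues i)) : cfcM f A = cfcM g A := by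
  rw [cfcM_of_isHermitian hA f, cfcM_of_isHermitian hA g]
  simp only [h]

lemma cfcM_posSemidef (hA : A.IsHermitian) {f : ℝ → ℝ}
    (h : ∀ i, 0 ≤ f (hA.eigenvalues i)) : (cfcM f A).PosSemidef := by
  rw [cfcM_of_isHermitian hA f]
  rw [show (star (hA.eigenvectorUnitary : Matrix (Fin d) (Fin d) ℂ))
      = (hA.eigenvectorUnitary : Matrix (Fin d) (Fin d) ℂ)ᴴ from rfl]
  exact PosSemidef.mul_mul_conjTranspose_same
    (PosSemidef.diagonal (fun i => Complex.zero_le_real.2 (h i))) _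

lemma cfcM_trace (hA : A.IsHermitian) (f : ℝ → ℝ) :
    (cfcM f A).trace = ∑ i, (f (hA.eigenvalues i) : ℂ) := by
  rw [cfcM_of_isHermitian hA f, trace_mul_cycle]
  have h1 : star (hA.eigenvectorUnitary : Matrix (Fin d) (Fin d) ℂ) *
      (hA.eigenvectorUnitary : Matrix (Fin d) (Fin d) ℂ) = 1 :=
    Unitary.star_mul_self_of_mem hA.eigenvectorUnitary.2
  rw [h1, one_mul, trace_diagonal]

/-! ### mpow lemmas -/

lemma mpow_isHermitian (hA : A.IsHermitian) (s : ℝ) : (mpow A s).IsHermitian :=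
  cfcM_isHermitian hA _

lemma mpow_posSemidef (hA : A.PosSemidef) (s : ℝ) : (mpow A s).PosSemidef :=
  cfcM_posSemidef hA.isHermitian fun i => Real.rpow_nonneg (hA.eigenvalues_nonneg i) s

lemma mpow_mul_mpow (hA : A.PosDef) (s t : ℝ) :
    mpow A s * mpow A t = mpow A (s + t) := by
  rw [mpow, mpow, mpow, cfcM_mul hA.isHermitian]
  exact cfcM_congr hA.isHermitian fun i => (Real.rpow_add (hA.eigenvalues_pos i) s t).symm

lemma mpow_one_eq (hA : A.IsHermitian) : mpow A 1 = A := by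
  rw [mpow, show (fun x : ℝ => x ^ (1 : ℝ)) = fun x => x from funext Real.rpow_one, cfcM_id hA]

lemma mpow_zero_eq (hA : A.IsHermitian) : mpow A 0 = 1 := by
  rw [mpow, show (fun x : ℝ => x ^ (0 : ℝ)) = fun _ => 1 from funext Real.rpow_zero, cfcM_one hA]

/-! ### trace lemmas -/

lemma psd_trace_nonneg (hP : P.PosSemidef) : 0 ≤ P.trace := by
  rw [Matrix.trace]
  apply Finset.sum_nonneg
  intro i _
  have := hP.dotProduct_mulVec_nonneg (Pi.single i 1)
  simpa [Matrix.mulVec_single, dotProduct, Pi.single_apply, apply_ite] using this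

lemma trace_mul_psd_nonneg (hP : P.PosSemidef) (hQ : Q.PosSemidef) :
    0 ≤ (P * Q).trace := by
  obtain ⟨C, rfl⟩ : ∃ C : Matrix (Fin d) (Fin d) ℂ, P = Cᴴ * C := by
    letI := Matrix.instCStarAlgebra (n := Fin d)
    open scoped MatrixOrder in exact CStarAlgebra.nonneg_iff_eq_star_mul_self.mp hP.nonneg
  rw [mul_assoc, trace_mul_comm]
  exact psd_trace_nonneg (hQ.mul_mul_conjTranspose_same C)

lemma trace_re_mono (h : (Q - P).PosSemidef) (hR : R.PosSemidef) :
    ((P * R).trace).re ≤ ((Q * R).trace).re := by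
  have h0 : 0 ≤ ((Q - P) * R).trace := trace_mul_psd_nonneg h hR
  rw [sub_mul, trace_sub] at h0
  have := (RCLike.nonneg_iff.mp h0).1
  simp only [Complex.sub_re, RCLike.re_to_complex] at this ⊢
  linarith

noncomputable def nrm {d : ℕ} (x : Fin d → ℂ) : ℝ := ‖(WithLp.equiv 2 (Fin d → ℂ)).symm x‖

lemma nrm_nonneg (x : Fin d → ℂ) : 0 ≤ nrm x := norm_nonneg _

lemma dot_self_eq (x : Fin d → ℂ) : star x ⬝ᵥ x = ((nrm x : ℝ) : ℂ) ^ 2 := by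
  rw [dotProduct_comm, ← EuclideanSpace.inner_toLp_toLp]
  exact inner_self_eq_norm_sq_to_K _

lemma nrm_eq_zero {x : Fin d → ℂ} : nrm x = 0 ↔ x = 0 := by
  rw [nrm, norm_eq_zero]
  exact ⟨fun h => (WithLp.equiv 2 (Fin d → ℂ)).symm.injective (h.trans rfl),
    fun h => by rw [h]; rfl⟩

lemma nrm_smul_real (c : ℝ) (x : Fin d → ℂ) : nrm (c • x) = |c| * nrm x := by
  rw [nrm, nrm, ← Real.norm_eq_abs]
  rw [show (WithLp.equiv 2 (Fin d → ℂ)).symm (c • x)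
    = c • (WithLp.equiv 2 (Fin d → ℂ)).symm x from rfl, norm_smul]

lemma re_dot_le_nrm (x y : Fin d → ℂ) : (star x ⬝ᵥ y).re ≤ nrm x * nrm y := by
  rw [dotProduct_comm, ← EuclideanSpace.inner_toLp_toLp]
  calc (inner ℂ ((WithLp.equiv 2 (Fin d → ℂ)).symm x) ((WithLp.equiv 2 (Fin d → ℂ)).symm y) : ℂ).re
      ≤ ‖(inner ℂ ((WithLp.equiv 2 (Fin d → ℂ)).symm x) ((WithLp.equiv 2 (Fin d → ℂ)).symm y) : ℂ)‖ :=
        Complex.re_le_norm _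
    _ ≤ _ := norm_inner_le_norm _ _

lemma star_mulVec_dot (M N : Matrix (Fin d) (Fin d) ℂ) (x : Fin d → ℂ) :
    star (M *ᵥ x) ⬝ᵥ (N *ᵥ x) = star x ⬝ᵥ ((Mᴴ * N) *ᵥ x) := by
  rw [← Matrix.mulVec_mulVec, Matrix.dotProduct_mulVec (star x) Mᴴ, ← Matrix.star_mulVec]

/-- `M` is a contraction. -/
def Contr {d : ℕ} (M : Matrix (Fin d) (Fin d) ℂ) : Prop := (1 - Mᴴ * M).PosSemidef

lemma contr_iff : Contr M ↔ ∀ x, nrm (M *ᵥ x) ≤ nrm x := by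
  constructor
  · intro h x
    have h2 := h.dotProduct_mulVec_nonneg x
    rw [Matrix.sub_mulVec, Matrix.one_mulVec, dotProduct_sub, ← star_mulVec_dot,
      dot_self_eq, dot_self_eq] at h2
    rw [sub_nonneg] at h2
    have h3 : (nrm (M *ᵥ x)) ^ 2 ≤ (nrm x) ^ 2 := by
      have := h2
      rw [show ((nrm (M *ᵥ x) : ℝ) : ℂ) ^ 2 = (((nrm (M *ᵥ x)) ^ 2 : ℝ) : ℂ) by push_cast; ring,
        show ((nrm x : ℝ) : ℂ) ^ 2 = (((nrm x) ^ 2 : ℝ) : ℂ) by push_cast; ring] at this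
      exact_mod_cast this
    exact (pow_le_pow_iff_left₀ (nrm_nonneg _) (nrm_nonneg _) two_ne_zero).mp h3
  · intro h
    refine Matrix.PosSemidef.of_dotProduct_mulVec_nonneg ?_ ?_
    · exact isHermitian_one.sub (Matrix.posSemidef_conjTranspose_mul_self M).isHermitian
    · intro x
      rw [Matrix.sub_mulVec, Matrix.one_mulVec, dotProduct_sub, ← star_mulVec_dot,
        dot_self_eq, dot_self_eq]
      rw [show ((nrm x : ℝ) : ℂ) ^ 2 - ((nrm (M *ᵥ x) : ℝ) : ℂ) ^ 2
        = (((nrm x ^ 2 - nrm (M *ᵥ x) ^ 2 : ℝ)) : ℂ) by push_cast; ring]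
      rw [Complex.zero_le_real]
      have := h x
      nlinarith [nrm_nonneg x, nrm_nonneg (M *ᵥ x)]

lemma Contr.mulVec_le (h : Contr M) (x : Fin d → ℂ) : nrm (M *ᵥ x) ≤ nrm x :=
  contr_iff.mp h x

lemma Contr.conjTranspose (h : Contr M) : Contr Mᴴ := by
  rw [contr_iff]
  intro x
  have h1 : nrm (Mᴴ *ᵥ x) ^ 2 = (star x ⬝ᵥ ((M * Mᴴ) *ᵥ x)).re := by
    have e1 := star_mulVec_dot Mᴴ Mᴴ x
    rw [conjTranspose_conjTranspose] at e1
    rw [← e1, dot_self_eq, ← Complex.ofReal_pow, Complex.ofReal_re]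
  have key : nrm (Mᴴ *ᵥ x) ^ 2 ≤ nrm x * nrm (Mᴴ *ᵥ x) := by
    rw [h1]
    calc (star x ⬝ᵥ ((M * Mᴴ) *ᵥ x)).re ≤ nrm x * nrm ((M * Mᴴ) *ᵥ x) := re_dot_le_nrm _ _
      _ ≤ nrm x * nrm (Mᴴ *ᵥ x) := by
          rw [← Matrix.mulVec_mulVec]
          exact mul_le_mul_of_nonneg_left (h.mulVec_le _) (nrm_nonneg _)
  rcases eq_or_lt_of_le (nrm_nonneg (Mᴴ *ᵥ x)) with h0 | h0
  · rw [← h0]; exact nrm_nonneg x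
  · nlinarith

lemma Contr.mul (h1 : Contr M) (h2 : Contr N) : Contr (M * N) := by
  rw [contr_iff]
  intro x
  rw [← Matrix.mulVec_mulVec]
  exact (h1.mulVec_le _).trans (h2.mulVec_le x)

/-- If a Hermitian matrix is similar to a contraction, its eigenvalues are `≤ 1`. -/
lemma eigenvalues_le_one_of_similar_contr (hC : C.IsHermitian)
    (hc : Contr N) (hRR : Q * R = 1) (hN : N = R * C * Q) (i : Fin d) :
    hC.eigenvalues i ≤ 1 := by
  set μ := hC.eigenvalues i with hμ
  set v : Fin d → ℂ := (WithLp.equiv 2 (Fin d → ℂ)) (hC.eigenvectorBasis i) with hv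
  have hvC : C *ᵥ v = μ • v := hC.mulVec_eigenvectorBasis i
  have hvne : v ≠ 0 := by
    intro h0
    have : hC.eigenvectorBasis i = 0 := by
      apply (WithLp.equiv 2 (Fin d → ℂ)).injective
      exact h0.trans (by simp)
    exact hC.eigenvectorBasis.toBasis.ne_zero i (by simpa using this)
  set w : Fin d → ℂ := R *ᵥ v with hw
  have hwne : w ≠ 0 := by
    intro h0
    apply hvne
    have : Q *ᵥ w = Q *ᵥ (0 : Fin d → ℂ) := by rw [h0]
    rw [hw, Matrix.mulVec_mulVec, hRR, Matrix.one_mulVec, Matrix.mulVec_zero] at this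
    exact this
  have hNw : N *ᵥ w = μ • w := by
    rw [hN, hw, Matrix.mulVec_mulVec, show R * C * Q * R = R * C * (Q * R) by
      simp only [mul_assoc], hRR, mul_one, ← Matrix.mulVec_mulVec, hvC]
    exact Matrix.mulVec_smul R μ v
  have hb := hc.mulVec_le w
  rw [hNw, nrm_smul_real] at hb
  have hwpos : 0 < nrm w := by
    rcases eq_or_lt_of_le (nrm_nonneg w) with h0 | h0
    · exact absurd (nrm_eq_zero.mp h0.symm) hwne
    · exact h0
  have : |μ| ≤ 1 := by
    by_contra hcon
    push_neg at hcon
    nlinarith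
  linarith [abs_le.mp this |>.2]

lemma psd_conj_herm (hX : X.PosSemidef) (hW : W.IsHermitian) : (W * X * W).PosSemidef := by
  have := hX.mul_mul_conjTranspose_same W
  rwa [hW.eq] at this

lemma mpow_neg_mul (hB : B.PosDef) (c : ℝ) : mpow B (-c) * mpow B c = 1 := by
  rw [mpow_mul_mpow hB, neg_add_cancel, mpow_zero_eq hB.isHermitian]

lemma mpow_mul_neg (hB : B.PosDef) (c : ℝ) : mpow B c * mpow B (-c) = 1 := by
  rw [mpow_mul_mpow hB, add_neg_cancel, mpow_zero_eq hB.isHermitian]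

/-- From `A^t ≤ B^t`, the matrix `A^{t/2} B^{-t/2}` is a contraction. -/
lemma contr_of_psd_diff (hA : A.PosDef) (hB : B.PosDef) {t : ℝ}
    (h : (mpow B t - mpow A t).PosSemidef) :
    Contr (mpow A (t/2) * mpow B (-(t/2))) := by
  have hconj : (mpow A (t/2) * mpow B (-(t/2)))ᴴ = mpow B (-(t/2)) * mpow A (t/2) := by
    rw [conjTranspose_mul, (mpow_isHermitian hA.isHermitian (t/2)).eq,
      (mpow_isHermitian hB.isHermitian (-(t/2))).eq]
  have e1 : mpow B (-(t/2)) * mpow B t * mpow B (-(t/2)) = 1 := by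
    rw [mpow_mul_mpow hB, show -(t/2) + t = t/2 by ring, mpow_mul_mpow hB,
      show t/2 + -(t/2) = (0:ℝ) by ring, mpow_zero_eq hB.isHermitian]
  have e2 : mpow B (-(t/2)) * mpow A (t/2) * (mpow A (t/2) * mpow B (-(t/2)))
      = mpow B (-(t/2)) * mpow A t * mpow B (-(t/2)) := by
    calc mpow B (-(t/2)) * mpow A (t/2) * (mpow A (t/2) * mpow B (-(t/2)))
        = mpow B (-(t/2)) * (mpow A (t/2) * mpow A (t/2)) * mpow B (-(t/2)) := by
          simp only [mul_assoc]
      _ = _ := by rw [mpow_mul_mpow hA, show t/2 + t/2 = t by ring]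
  have key : (1 : Matrix (Fin d) (Fin d) ℂ) -
      mpow B (-(t/2)) * mpow A (t/2) * (mpow A (t/2) * mpow B (-(t/2)))
      = mpow B (-(t/2)) * (mpow B t - mpow A t) * mpow B (-(t/2)) := by
    rw [mul_sub, sub_mul, e1, e2]
  unfold Contr
  rw [hconj, key]
  exact psd_conj_herm h (mpow_isHermitian hB.isHermitian _)

/-- Midpoint step for Löwner–Heinz. -/
lemma midpoint_step (hA : A.PosDef) (hB : B.PosDef) (s t : ℝ)
    (hs : (mpow B s - mpow A s).PosSemidef) (ht : (mpow B t - mpow A t).PosSemidef) :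
    (mpow B ((s+t)/2) - mpow A ((s+t)/2)).PosSemidef := by
  set g : ℝ := (s+t)/2 with hg
  have hC : (mpow B (-(g/2)) * mpow A g * mpow B (-(g/2))).IsHermitian := by
    have := isHermitian_mul_mul_conjTranspose (mpow B (-(g/2)))
      (mpow_isHermitian hA.isHermitian g)
    rwa [(mpow_isHermitian hB.isHermitian (-(g/2))).eq] at this
  have hM2 : Contr (mpow A (t/2) * mpow B (-(t/2))) := contr_of_psd_diff hA hB ht
  have hM1 : Contr (mpow B (-(s/2)) * mpow A (s/2)) := by
    have := (contr_of_psd_diff hA hB hs).conjTranspose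
    rwa [conjTranspose_mul, (mpow_isHermitian hA.isHermitian (s/2)).eq,
      (mpow_isHermitian hB.isHermitian (-(s/2))).eq] at this
  have hN : Contr (mpow B (-(s/2)) * mpow A (s/2) * (mpow A (t/2) * mpow B (-(t/2)))) :=
    hM1.mul hM2
  have hNeq : mpow B (-(s/2)) * mpow A (s/2) * (mpow A (t/2) * mpow B (-(t/2)))
      = mpow B ((t-s)/4) * (mpow B (-(g/2)) * mpow A g * mpow B (-(g/2))) *
        mpow B (-((t-s)/4)) := by
    have lhs_eq : mpow B (-(s/2)) * mpow A (s/2) * (mpow A (t/2) * mpow B (-(t/2)))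
        = mpow B (-(s/2)) * mpow A g * mpow B (-(t/2)) := by
      calc mpow B (-(s/2)) * mpow A (s/2) * (mpow A (t/2) * mpow B (-(t/2)))
          = mpow B (-(s/2)) * (mpow A (s/2) * mpow A (t/2)) * mpow B (-(t/2)) := by
            simp only [mul_assoc]
        _ = _ := by rw [mpow_mul_mpow hA, show s/2 + t/2 = g by rw [hg]; ring]
    have rhs_eq : mpow B ((t-s)/4) * (mpow B (-(g/2)) * mpow A g * mpow B (-(g/2))) *
          mpow B (-((t-s)/4))
        = mpow B (-(s/2)) * mpow A g * mpow B (-(t/2)) := by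
      calc mpow B ((t-s)/4) * (mpow B (-(g/2)) * mpow A g * mpow B (-(g/2))) * mpow B (-((t-s)/4))
          = (mpow B ((t-s)/4) * mpow B (-(g/2))) * mpow A g *
              (mpow B (-(g/2)) * mpow B (-((t-s)/4))) := by simp only [mul_assoc]
        _ = _ := by
            rw [mpow_mul_mpow hB, mpow_mul_mpow hB,
              show (t-s)/4 + -(g/2) = -(s/2) by rw [hg]; ring,
              show -(g/2) + -((t-s)/4) = -(t/2) by rw [hg]; ring]
    rw [lhs_eq, rhs_eq]
  have hQR : mpow B (-((t-s)/4)) * mpow B ((t-s)/4) = 1 := mpow_neg_mul hB _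
  have ev : ∀ i, hC.eigenvalues i ≤ 1 :=
    eigenvalues_le_one_of_similar_contr hC hN hQR hNeq
  have one_sub_C : ((1 : Matrix (Fin d) (Fin d) ℂ) -
      mpow B (-(g/2)) * mpow A g * mpow B (-(g/2))).PosSemidef := by
    have e : (1 : Matrix (Fin d) (Fin d) ℂ) - mpow B (-(g/2)) * mpow A g * mpow B (-(g/2))
        = cfcM (fun x => 1 - x) (mpow B (-(g/2)) * mpow A g * mpow B (-(g/2))) := by
      rw [← cfcM_sub hC, cfcM_one hC, cfcM_id hC]
    rw [e]
    exact cfcM_posSemidef hC (fun i => by linarith [ev i])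
  have f1 : mpow B (g/2) * mpow B (g/2) = mpow B g := by
    rw [mpow_mul_mpow hB, show g/2 + g/2 = g by ring]
  have f2 : mpow B (g/2) * (mpow B (-(g/2)) * mpow A g * mpow B (-(g/2))) * mpow B (g/2)
      = mpow A g := by
    calc mpow B (g/2) * (mpow B (-(g/2)) * mpow A g * mpow B (-(g/2))) * mpow B (g/2)
        = (mpow B (g/2) * mpow B (-(g/2))) * mpow A g *
            (mpow B (-(g/2)) * mpow B (g/2)) := by simp only [mul_assoc]
      _ = mpow A g := by rw [mpow_mul_neg hB, mpow_neg_mul hB, one_mul, mul_one]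
  have final : mpow B g - mpow A g
      = mpow B (g/2) * ((1 : Matrix (Fin d) (Fin d) ℂ) -
          mpow B (-(g/2)) * mpow A g * mpow B (-(g/2))) * mpow B (g/2) := by
    rw [mul_sub, sub_mul, mul_one, f1, f2]
  rw [final]
  exact psd_conj_herm one_sub_C (mpow_isHermitian hB.isHermitian _)

lemma dyadic_LH (hA : A.PosDef) (hB : B.PosDef) (hAB : (B - A).PosSemidef) :
    ∀ m k : ℕ, k ≤ 2 ^ m →
      (mpow B ((k : ℝ) / 2 ^ m) - mpow A ((k : ℝ) / 2 ^ m)).PosSemidef := by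
  intro m
  induction m with
  | zero =>
    intro k hk
    interval_cases k
    · rw [show ((0:ℕ) : ℝ) / 2 ^ 0 = (0:ℝ) by norm_num, mpow_zero_eq hA.isHermitian,
        mpow_zero_eq hB.isHermitian, sub_self]
      exact Matrix.PosSemidef.zero
    · rw [show ((1:ℕ) : ℝ) / 2 ^ 0 = (1:ℝ) by norm_num, mpow_one_eq hA.isHermitian,
        mpow_one_eq hB.isHermitian]
      exact hAB
  | succ m ih =>
    intro k hk
    rcases Nat.even_or_odd k with ⟨j, hj⟩ | ⟨j, hj⟩
    · subst hj
      have hj2 : j ≤ 2 ^ m := by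
        have : 2 * j ≤ 2 * 2 ^ m := by omega
        omega
      have e : ((j + j : ℕ) : ℝ) / 2 ^ (m + 1) = (j : ℝ) / 2 ^ m := by
        push_cast
        field_simp
        ring
      rw [e]
      exact ih j hj2
    · subst hj
      have hj1 : j ≤ 2 ^ m := by
        have h2 : 2 * j + 1 ≤ 2 * 2 ^ m := by
          have : 2 ^ (m + 1) = 2 * 2 ^ m := by ring
          omega
        omega
      have hj2 : j + 1 ≤ 2 ^ m := by
        have h2 : 2 * j + 1 ≤ 2 * 2 ^ m := by
          have : 2 ^ (m + 1) = 2 * 2 ^ m := by ring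
          omega
        omega
      have e : ((2 * j + 1 : ℕ) : ℝ) / 2 ^ (m + 1)
          = ((j : ℝ) / 2 ^ m + ((j + 1 : ℕ) : ℝ) / 2 ^ m) / 2 := by
        push_cast
        field_simp
        ring
      rw [e]
      exact midpoint_step hA hB _ _ (ih j hj1) (ih (j + 1) hj2)

lemma mpow_entry_eq (hA : A.PosDef) (σ : ℝ) (i j : Fin d) :
    mpow A σ i j = ∑ k, (hA.isHermitian.eigenvectorUnitary : Matrix (Fin d) (Fin d) ℂ) i k *
      ((hA.isHermitian.eigenvalues k ^ σ : ℝ) : ℂ) *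
      (star (hA.isHermitian.eigenvectorUnitary : Matrix (Fin d) (Fin d) ℂ)) k j := by
  rw [mpow, cfcM_of_isHermitian hA.isHermitian, Matrix.mul_apply]
  congr 1
  funext k
  rw [Matrix.mul_diagonal]

lemma mpow_entry_continuous (hA : A.PosDef) (i j : Fin d) :
    Continuous fun σ : ℝ => mpow A σ i j := by
  have : (fun σ : ℝ => mpow A σ i j) = fun σ =>
      ∑ k, (hA.isHermitian.eigenvectorUnitary : Matrix (Fin d) (Fin d) ℂ) i k *
      ((hA.isHermitian.eigenvalues k ^ σ : ℝ) : ℂ) *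
      (star (hA.isHermitian.eigenvectorUnitary : Matrix (Fin d) (Fin d) ℂ)) k j :=
    funext fun σ => mpow_entry_eq hA σ i j
  rw [this]
  apply continuous_finset_sum
  intro k _
  have hrp : Continuous fun σ : ℝ => hA.isHermitian.eigenvalues k ^ σ := by
    have : (fun σ : ℝ => hA.isHermitian.eigenvalues k ^ σ)
        = fun σ => Real.exp (Real.log (hA.isHermitian.eigenvalues k) * σ) :=
      funext fun σ => Real.rpow_def_of_pos (hA.eigenvalues_pos k) σ
    rw [this]
    exact Real.continuous_exp.comp (continuous_const.mul continuous_id)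
  exact (continuous_const.mul (Complex.continuous_ofReal.comp hrp)).mul continuous_const

theorem loewner_heinz (hA : A.PosDef) (hB : B.PosDef) (hAB : (B - A).PosSemidef)
    {σ : ℝ} (h0 : 0 ≤ σ) (h1 : σ ≤ 1) : (mpow B σ - mpow A σ).PosSemidef := by
  refine Matrix.PosSemidef.of_dotProduct_mulVec_nonneg ?_ ?_
  · exact (mpow_isHermitian hB.isHermitian σ).sub (mpow_isHermitian hA.isHermitian σ)
  · intro x
    have hq : Continuous fun τ : ℝ => star x ⬝ᵥ ((mpow B τ - mpow A τ) *ᵥ x) := by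
      have e : (fun τ : ℝ => star x ⬝ᵥ ((mpow B τ - mpow A τ) *ᵥ x))
          = fun τ => ∑ i, (star x) i * ∑ j, (mpow B τ i j - mpow A τ i j) * x j := by
        funext τ
        simp [dotProduct, Matrix.mulVec, Matrix.sub_apply]
      rw [e]
      apply continuous_finset_sum
      intro i _
      apply Continuous.mul continuous_const
      apply continuous_finset_sum
      intro j _
      exact (((mpow_entry_continuous hB i j).sub (mpow_entry_continuous hA i j)).mul
        continuous_const)
    set a : ℕ → ℝ := fun m => (⌊σ * 2 ^ m⌋₊ : ℝ) / 2 ^ m with ha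
    have h2m : ∀ m : ℕ, (0:ℝ) < 2 ^ m := fun m => by positivity
    have ha_le : ∀ m, a m ≤ σ := by
      intro m
      rw [ha]
      rw [div_le_iff₀ (h2m m)]
      exact Nat.floor_le (by positivity)
    have ha_lb : ∀ m, σ - (1/2) ^ m ≤ a m := by
      intro m
      rw [ha]
      rw [le_div_iff₀ (h2m m)]
      have hf := Nat.lt_floor_add_one (σ * 2 ^ m)
      have : (σ - (1/2) ^ m) * 2 ^ m = σ * 2 ^ m - 1 := by
        rw [sub_mul]
        congr 1
        rw [div_pow, one_pow, div_mul_cancel₀]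
        exact ne_of_gt (h2m m)
      rw [this]
      linarith
    have ha_tend : Filter.Tendsto a Filter.atTop (nhds σ) := by
      have hl : Filter.Tendsto (fun m : ℕ => σ - (1/2) ^ m) Filter.atTop (nhds σ) := by
        have := tendsto_pow_atTop_nhds_zero_of_lt_one
          (show (0:ℝ) ≤ 1/2 by norm_num) (show (1:ℝ)/2 < 1 by norm_num)
        simpa using tendsto_const_nhds.sub this
      exact tendsto_of_tendsto_of_tendsto_of_le_of_le hl tendsto_const_nhds ha_lb ha_le
    have hclosed : IsClosed {z : ℂ | 0 ≤ z} := isClosed_le continuous_const continuous_id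
    have hmem : ∀ m, star x ⬝ᵥ ((mpow B (a m) - mpow A (a m)) *ᵥ x) ∈ {z : ℂ | 0 ≤ z} := by
      intro m
      have hk : ⌊σ * 2 ^ m⌋₊ ≤ 2 ^ m := by
        have : σ * 2 ^ m ≤ ((2 ^ m : ℕ) : ℝ) := by
          push_cast
          nlinarith [h2m m]
        calc ⌊σ * 2 ^ m⌋₊ ≤ ⌊((2 ^ m : ℕ) : ℝ)⌋₊ := Nat.floor_mono this
          _ = 2 ^ m := Nat.floor_natCast _
      have := dyadic_LH hA hB hAB m ⌊σ * 2 ^ m⌋₊ hk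
      have e : a m = ((⌊σ * 2 ^ m⌋₊ : ℕ) : ℝ) / 2 ^ m := by rw [ha]
      rw [e]
      exact this.dotProduct_mulVec_nonneg x
    exact hclosed.mem_of_tendsto ((hq.tendsto σ).comp ha_tend)
      (Filter.Eventually.of_forall hmem)

end Development

/-- For positive definite `A`, `B` on `ℂ^n` and `s ∈ [0,1]`:
`(1/2)(Tr A + Tr B − Tr|A−B|) ≤ Tr (A^{1−s} B^{s})`. -/
theorem trace_abs_le_trace_rpow_mul_rpow {n : ℕ}
    (A B : Matrix (Fin n) (Fin n) ℂ) (hA : A.PosDef) (hB : B.PosDef)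
    (s : ℝ) (hs : s ∈ Set.Icc (0 : ℝ) 1) :
    (1 / 2 : ℝ) * ((A.trace).re + (B.trace).re - ((matAbs (A - B)).trace).re)
      ≤ ((mpow A (1 - s) * mpow B s).trace).re := by
  obtain ⟨hs0, hs1⟩ := hs
  have hABh : (A - B).IsHermitian := hA.isHermitian.sub hB.isHermitian
  set Δ : Matrix (Fin n) (Fin n) ℂ := cfcM (fun x => max x 0) (A - B) with hΔ
  have hΔpsd : Δ.PosSemidef := cfcM_posSemidef hABh (fun i => le_max_right _ 0)
  have hΔsub : (Δ - (A - B)).PosSemidef := by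
    have e0 : cfcM (fun x => max x 0) (A - B) - cfcM (fun x => x) (A - B)
        = cfcM (fun x => max x 0 - x) (A - B) := cfcM_sub hABh _ _
    rw [cfcM_id hABh] at e0
    have hpsd := cfcM_posSemidef hABh (f := fun x => max x 0 - x)
      (fun i => by simp [le_max_iff])
    rw [← e0] at hpsd
    exact hpsd
  -- trace identities at the real level
  have habs : ((matAbs (A - B)).trace).re
      = 2 * (Δ.trace).re - ((A.trace).re - (B.trace).re) := by
    have h1 : ((matAbs (A - B)).trace) = ∑ i, ((|hABh.eigenvalues i| : ℝ) : ℂ) :=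
      cfcM_trace hABh _
    have h2 : (Δ.trace) = ∑ i, ((max (hABh.eigenvalues i) 0 : ℝ) : ℂ) :=
      cfcM_trace hABh _
    have h3 : ((A - B).trace) = ∑ i, ((hABh.eigenvalues i : ℝ) : ℂ) := by
      have := cfcM_trace hABh (fun x => x)
      rwa [cfcM_id hABh] at this
    have h3' : (A.trace).re - (B.trace).re = ∑ i, hABh.eigenvalues i := by
      have := congrArg Complex.re h3
      rw [Matrix.trace_sub, Complex.sub_re] at this
      rw [this, ← Complex.ofReal_sum, Complex.ofReal_re]
    have r1 : ((matAbs (A - B)).trace).re = ∑ i, |hABh.eigenvalues i| := by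
      rw [h1, ← Complex.ofReal_sum, Complex.ofReal_re]
    have r2 : (Δ.trace).re = ∑ i, max (hABh.eigenvalues i) 0 := by
      rw [h2, ← Complex.ofReal_sum, Complex.ofReal_re]
    rw [r1, r2, h3']
    calc ∑ i, |hABh.eigenvalues i|
        = ∑ i, (2 * max (hABh.eigenvalues i) 0 - hABh.eigenvalues i) :=
          Finset.sum_congr rfl (fun i _ => by
            rcases le_total 0 (hABh.eigenvalues i) with h | h
            · rw [abs_of_nonneg h, max_eq_left h]; ring
            · rw [abs_of_nonpos h, max_eq_right h]; ring)
      _ = 2 * (∑ i, max (hABh.eigenvalues i) 0) - ∑ i, hABh.eigenvalues i := by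
          rw [Finset.sum_sub_distrib, Finset.mul_sum]
  -- the auxiliary matrix B + Δ
  set Bt : Matrix (Fin n) (Fin n) ℂ := B + Δ with hBtdef
  have hBtpd : Bt.PosDef := hB.add_posSemidef hΔpsd
  have hBtA : (Bt - A).PosSemidef := by
    have e : Bt - A = Δ - (A - B) := by rw [hBtdef]; abel
    rw [e]; exact hΔsub
  have hBtB : (Bt - B).PosSemidef := by
    have e : Bt - B = Δ := by rw [hBtdef]; abel
    rw [e]; exact hΔpsd
  have h1s0 : (0:ℝ) ≤ 1 - s := by linarith
  have h1s1 : (1:ℝ) - s ≤ 1 := by linarith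
  have LH1 := loewner_heinz hA hBtpd hBtA hs0 hs1
  have LH1' := loewner_heinz hA hBtpd hBtA h1s0 h1s1
  have LH2 := loewner_heinz hB hBtpd hBtB hs0 hs1
  have LH2' := loewner_heinz hB hBtpd hBtB h1s0 h1s1
  have i1 : (A.trace).re ≤ ((mpow Bt s * mpow A (1-s)).trace).re := by
    have h := trace_re_mono LH1 (mpow_posSemidef hA.posSemidef (1-s))
    rwa [mpow_mul_mpow hA, show s + (1-s) = (1:ℝ) by ring, mpow_one_eq hA.isHermitian] at h
  have i2 := trace_re_mono LH1' LH2
  have i3 : (B.trace).re ≤ ((mpow Bt (1-s) * mpow B s).trace).re := by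
    have h := trace_re_mono LH2' (mpow_posSemidef hB.posSemidef s)
    rwa [mpow_mul_mpow hB, show 1 - s + s = (1:ℝ) by ring, mpow_one_eq hB.isHermitian] at h
  have e2l : ((mpow A (1-s) * (mpow Bt s - mpow B s)).trace).re
      = ((mpow A (1-s) * mpow Bt s).trace).re - ((mpow A (1-s) * mpow B s).trace).re := by
    rw [mul_sub, trace_sub, Complex.sub_re]
  have e2r : ((mpow Bt (1-s) * (mpow Bt s - mpow B s)).trace).re
      = (Bt.trace).re - ((mpow Bt (1-s) * mpow B s).trace).re := by
    rw [mul_sub, trace_sub, Complex.sub_re, mpow_mul_mpow hBtpd,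
      show 1 - s + s = (1:ℝ) by ring, mpow_one_eq hBtpd.isHermitian]
  rw [e2l, e2r] at i2
  have etr : (Bt.trace).re = (B.trace).re + (Δ.trace).re := by
    rw [hBtdef, trace_add, Complex.add_re]
  have ecomm : ((mpow Bt s * mpow A (1-s)).trace).re
      = ((mpow A (1-s) * mpow Bt s).trace).re := by rw [trace_mul_comm]
  rw [habs]
  linarith [i1, i2, i3, etr, ecomm]
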